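/- If there exists a tuple r̄ ∈ (0,1)ⁿ with coordinates algebraically independent over ℚ such that R_r̄ is discretely ordered, then R_r̄' is discretely ordered for every tuple r̄' ∈ (0,1)ⁿ with coordinates algebraically independent over ℚ. -/
import Mathlib


open FirstOrder FirstOrder.Language

/-- Function symbols of the first-order language of ordered rings. -/
inductive ORingFunc : ℕ → Type
  | add : ORingFunc 2
  | mul : ORingFunc 2
  | neg : ORingFunc 1
  | zero : ORingFunc 0
  | one : ORingFunc 0

/-- Relation symbols of the first-order language of ordered rings. -/
inductive ORingRel : ℕ → Type
  | le : ORingRel 2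

/-- The first-order language `L` of ordered rings, with signature `(+, −, ·, ≤, 0, 1)`. -/
def ORing : Language := ⟨ORingFunc, ORingRel⟩

/-- The canonical interpretation of the language of ordered rings in any type
carrying the corresponding operations. -/
instance ORingStructure (R : Type*) [Add R] [Mul R] [Neg R] [Zero R] [One R] [LE R] :
    ORing.Structure R where
  funMap {n} f v :=
    match n, f with
    | _, ORingFunc.add => v 0 + v 1
    | _, ORingFunc.mul => v 0 * v 1
    | _, ORingFunc.neg => -(v 0)
    | _, ORingFunc.zero => 0
    | _, ORingFunc.one => 1
  RelMap {n} r v :=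
    match n, r with
    | _, ORingRel.le => v 0 ≤ v 1

/-- An `L`-sentence is universal if it is a block of universal quantifiers applied
to a quantifier-free formula. -/
def IsUniversalSentence (φ : ORing.Sentence) : Prop :=
  ∃ (k : ℕ) (ψ : ORing.BoundedFormula Empty k), ψ.IsQF ∧ φ = ψ.alls

/-- An ordered ring is diophantine correct if it satisfies every universal
`L`-sentence true in the ordered ring of integers. -/
def DiophCorrect (R : Type*) [Add R] [Mul R] [Neg R] [Zero R] [One R] [LE R] : Prop :=
  ∀ φ : ORing.Sentence, IsUniversalSentence φ → (ℤ ⊨ φ) → (R ⊨ φ)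

/-- The ring of real-valued functions on `(0, ∞)` (with pointwise operations),
carrying the "eventual" order used on rings of Puiseux polynomials. -/
def PuiseuxFuns : Type := Set.Ioi (0 : ℝ) → ℝ

noncomputable instance : CommRing PuiseuxFuns := Pi.commRing

/-- `f ≤ g` iff `f t ≤ g t` for all sufficiently large `t`.  On rings of Puiseux
polynomials this induces the linear order in which `f > 0` iff `f t > 0` for all
sufficiently large `t`. -/
instance : LE PuiseuxFuns :=
  ⟨fun f g => ∃ T : ℝ, ∀ t : Set.Ioi (0 : ℝ), T < (t : ℝ) → f t ≤ g t⟩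

/-- A real Puiseux polynomial: a function of the form
`t ↦ a₁ t^{q₁} + … + a_k t^{q_k}` (with `aⱼ ∈ ℝ`, `qⱼ ∈ ℚ`) on `(0, ∞)`. -/
def IsPuiseuxPoly (f : PuiseuxFuns) : Prop :=
  ∃ (k : ℕ) (a : Fin k → ℝ) (q : Fin k → ℚ),
    ∀ t : Set.Ioi (0 : ℝ), f t = ∑ j, a j * (t : ℝ) ^ (q j : ℝ)

/-- A discretely ordered structure: no element lies strictly between `0` and `1`
(expressed using `≤` only, since the strict order is definable from it). -/
def DiscretelyOrderedLE (R : Type*) [Zero R] [One R] [LE R] : Prop :=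
  ∀ x : R, ¬((0 : R) ≤ x ∧ ¬x ≤ 0 ∧ x ≤ 1 ∧ ¬(1 : R) ≤ x)

/-- Given polynomials `g₁(t), g₂(t,x₁), …, gₙ(t,x₁,…,x_{n−1})` and reals `r₁,…,rₙ`,
this is the ring `R_r̄ = ℤ[t, f₁(t) − r₁, …, fₙ(t) − rₙ]`, where
`fᵢ(t) = gᵢ(t, r₁, …, r_{i−1})`, as a subring of the functions on `(0,∞)`. -/
noncomputable def puiseuxGen {n : ℕ} (g : ∀ i : Fin n, MvPolynomial (Fin ((i : ℕ) + 1)) ℝ)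
    (r : Fin n → ℝ) : Subring PuiseuxFuns :=
  Subring.closure (insert (fun t : Set.Ioi (0 : ℝ) => (t : ℝ))
    (Set.range fun i : Fin n =>
      (fun t : Set.Ioi (0 : ℝ) =>
        MvPolynomial.eval
          (fun m : Fin ((i : ℕ) + 1) =>
            if (m : ℕ) = 0 then (t : ℝ)
            else r ⟨(m : ℕ) - 1, by have := m.isLt; have := i.isLt; omega⟩)
          (g i) - r i : PuiseuxFuns)))

/-- The tuple `(y₀, …, y_i)` of real values extracted from an integer tuple
`(y₀, …, yₙ)`, used as the argument list of `σ_{i+1}`. -/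
def intTup {n : ℕ} (y : Fin (n + 1) → ℤ) (i : Fin n) : Fin ((i : ℕ) + 1) → ℝ :=
  fun p => (y ⟨(p : ℕ), by have := p.isLt; have := i.isLt; omega⟩ : ℝ)

namespace PuiseuxAux

open MvPolynomial

lemma le_iff {x y : PuiseuxFuns} :
    x ≤ y ↔ ∃ T : ℝ, ∀ t : Set.Ioi (0 : ℝ), T < (t : ℝ) → x t ≤ y t := Iff.rfl

lemma sub_apply (x y : PuiseuxFuns) (t : Set.Ioi (0 : ℝ)) : (x - y) t = x t - y t := rfl

lemma mul_apply (x y : PuiseuxFuns) (t : Set.Ioi (0 : ℝ)) : (x * y) t = x t * y t := rfl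

variable {n : ℕ}

/-- The substitution polynomials: `X 0 ↦ X 0` (the variable `t`) and
`X i.succ ↦ gᵢ(X 0, …, X i) - X i.succ`. -/
noncomputable def substMap (g : ∀ i : Fin n, MvPolynomial (Fin ((i : ℕ) + 1)) ℝ) :
    Fin (n + 1) → MvPolynomial (Fin (n + 1)) ℝ :=
  Fin.cases (X 0) fun i =>
    rename (Fin.castLE (Nat.succ_le_succ i.isLt.le)) (g i) - X i.succ

lemma cons_castLE (r : Fin n → ℝ) (t : ℝ) (i : Fin n) (m : Fin ((i : ℕ) + 1)) :
    (Fin.cons t r : Fin (n + 1) → ℝ) (Fin.castLE (Nat.succ_le_succ i.isLt.le) m) =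
      if (m : ℕ) = 0 then t
      else r ⟨(m : ℕ) - 1, by have := m.isLt; have := i.isLt; omega⟩ := by
  rcases m with ⟨mv, hm⟩
  cases mv with
  | zero =>
      have h0 : (Fin.castLE (Nat.succ_le_succ i.isLt.le) ⟨0, hm⟩ : Fin (n + 1)) = 0 := by
        ext; simp
      rw [h0, Fin.cons_zero]; simp
  | succ k =>
      have hs : (Fin.castLE (Nat.succ_le_succ i.isLt.le) ⟨k + 1, hm⟩ : Fin (n + 1)) =
          Fin.succ ⟨k, by have := i.isLt; omega⟩ := by
        ext; simp
      rw [hs, Fin.cons_succ]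
      simp

lemma eval_substMap_zero (g : ∀ i : Fin n, MvPolynomial (Fin ((i : ℕ) + 1)) ℝ)
    (r : Fin n → ℝ) (t : ℝ) :
    eval (Fin.cons t r) (substMap g 0) = t := by
  simp [substMap]

lemma eval_substMap_succ (g : ∀ i : Fin n, MvPolynomial (Fin ((i : ℕ) + 1)) ℝ)
    (r : Fin n → ℝ) (t : ℝ) (i : Fin n) :
    eval (Fin.cons t r) (substMap g i.succ) =
      eval (fun m : Fin ((i : ℕ) + 1) =>
          if (m : ℕ) = 0 then t
          else r ⟨(m : ℕ) - 1, by have := m.isLt; have := i.isLt; omega⟩)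
        (g i) - r i := by
  have hfun : (Fin.cons t r : Fin (n + 1) → ℝ) ∘ Fin.castLE (Nat.succ_le_succ i.isLt.le) =
      (fun m : Fin ((i : ℕ) + 1) =>
        if (m : ℕ) = 0 then t
        else r ⟨(m : ℕ) - 1, by have := m.isLt; have := i.isLt; omega⟩) :=
    funext fun m => cons_castLE r t i m
  rw [substMap, Fin.cases_succ, map_sub, eval_rename, eval_X, Fin.cons_succ, hfun]

/-- Evaluation of an integer polynomial at `(t, f₁(t) - r₁, …, fₙ(t) - rₙ)`, as a
ring hom into `PuiseuxFuns`. -/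
noncomputable def theta (g : ∀ i : Fin n, MvPolynomial (Fin ((i : ℕ) + 1)) ℝ)
    (r : Fin n → ℝ) : MvPolynomial (Fin (n + 1)) ℤ →+* PuiseuxFuns where
  toFun P := fun t => eval (Fin.cons (t : ℝ) r) (aeval (R := ℤ) (substMap g) P)
  map_one' := funext fun t => by
    show eval (Fin.cons (t : ℝ) r) (aeval (R := ℤ) (substMap g) 1) = 1
    rw [map_one, map_one]
  map_mul' P Q := funext fun t => by
    show eval (Fin.cons (t : ℝ) r) (aeval (R := ℤ) (substMap g) (P * Q)) =
      eval (Fin.cons (t : ℝ) r) (aeval (R := ℤ) (substMap g) P) *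
        eval (Fin.cons (t : ℝ) r) (aeval (R := ℤ) (substMap g) Q)
    rw [map_mul, map_mul]
  map_zero' := funext fun t => by
    show eval (Fin.cons (t : ℝ) r) (aeval (R := ℤ) (substMap g) 0) = 0
    rw [map_zero, map_zero]
  map_add' P Q := funext fun t => by
    show eval (Fin.cons (t : ℝ) r) (aeval (R := ℤ) (substMap g) (P + Q)) =
      eval (Fin.cons (t : ℝ) r) (aeval (R := ℤ) (substMap g) P) +
        eval (Fin.cons (t : ℝ) r) (aeval (R := ℤ) (substMap g) Q)
    rw [map_add, map_add]

lemma theta_apply (g : ∀ i : Fin n, MvPolynomial (Fin ((i : ℕ) + 1)) ℝ)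
    (r : Fin n → ℝ) (P : MvPolynomial (Fin (n + 1)) ℤ) (t : Set.Ioi (0 : ℝ)) :
    theta g r P t = eval (Fin.cons (t : ℝ) r) (aeval (R := ℤ) (substMap g) P) := rfl

lemma theta_X_zero (g : ∀ i : Fin n, MvPolynomial (Fin ((i : ℕ) + 1)) ℝ)
    (r : Fin n → ℝ) :
    theta g r (X 0) = (fun t : Set.Ioi (0 : ℝ) => (t : ℝ) : PuiseuxFuns) := by
  funext t
  rw [theta_apply, aeval_X, eval_substMap_zero]

lemma theta_X_succ (g : ∀ i : Fin n, MvPolynomial (Fin ((i : ℕ) + 1)) ℝ)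
    (r : Fin n → ℝ) (i : Fin n) :
    theta g r (X i.succ) =
      (fun t : Set.Ioi (0 : ℝ) =>
        eval (fun m : Fin ((i : ℕ) + 1) =>
            if (m : ℕ) = 0 then (t : ℝ)
            else r ⟨(m : ℕ) - 1, by have := m.isLt; have := i.isLt; omega⟩)
          (g i) - r i : PuiseuxFuns) := by
  funext t
  rw [theta_apply, aeval_X, eval_substMap_succ]

lemma theta_mem (g : ∀ i : Fin n, MvPolynomial (Fin ((i : ℕ) + 1)) ℝ)
    (r : Fin n → ℝ) (P : MvPolynomial (Fin (n + 1)) ℤ) :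
    theta g r P ∈ puiseuxGen g r := by
  induction P using MvPolynomial.induction_on with
  | C z =>
      rw [eq_intCast (MvPolynomial.C : ℤ →+* MvPolynomial (Fin (n + 1)) ℤ) z, map_intCast]
      exact intCast_mem _ z
  | add p q hp hq => rw [map_add]; exact add_mem hp hq
  | mul_X p j hp =>
      rw [map_mul]
      refine mul_mem hp (Subring.subset_closure ?_)
      induction j using Fin.cases with
      | zero => exact Set.mem_insert_iff.mpr (Or.inl (theta_X_zero g r))
      | succ i => exact Set.mem_insert_iff.mpr (Or.inr ⟨i, (theta_X_succ g r i).symm⟩)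

lemma exists_theta_eq (g : ∀ i : Fin n, MvPolynomial (Fin ((i : ℕ) + 1)) ℝ)
    (r : Fin n → ℝ) {x : PuiseuxFuns} (hx : x ∈ puiseuxGen g r) :
    ∃ P : MvPolynomial (Fin (n + 1)) ℤ, theta g r P = x := by
  induction hx using Subring.closure_induction with
  | mem y hy =>
      rcases Set.mem_insert_iff.mp hy with rfl | ⟨i, rfl⟩
      · exact ⟨X 0, theta_X_zero g r⟩
      · exact ⟨X i.succ, theta_X_succ g r i⟩
  | zero => exact ⟨0, map_zero _⟩
  | one => exact ⟨1, map_one _⟩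
  | add x y hx hy ihx ihy =>
      obtain ⟨P, hP⟩ := ihx; obtain ⟨Q, hQ⟩ := ihy
      exact ⟨P + Q, by rw [map_add, hP, hQ]⟩
  | neg x hx ihx =>
      obtain ⟨P, hP⟩ := ihx
      exact ⟨-P, by rw [map_neg, hP]⟩
  | mul x y hx hy ihx ihy =>
      obtain ⟨P, hP⟩ := ihx; obtain ⟨Q, hQ⟩ := ihy
      exact ⟨P * Q, by rw [map_mul, hP, hQ]⟩

lemma substMap_coeff_mem (g : ∀ i : Fin n, MvPolynomial (Fin ((i : ℕ) + 1)) ℝ)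
    (halg : ∀ (i : Fin n) (d : Fin ((i : ℕ) + 1) →₀ ℕ),
      IsAlgebraic ℚ (MvPolynomial.coeff d (g i)))
    (j : Fin (n + 1)) (d : Fin (n + 1) →₀ ℕ) :
    (substMap g j).coeff d ∈ integralClosure ℚ ℝ := by
  induction j using Fin.cases with
  | zero =>
      rw [substMap, Fin.cases_zero, coeff_X']
      split
      · exact one_mem _
      · exact zero_mem _
  | succ i =>
      rw [substMap, Fin.cases_succ, coeff_sub]
      refine sub_mem ?_ ?_
      · by_cases h : (rename (Fin.castLE (Nat.succ_le_succ i.isLt.le)) (g i)).coeff d = 0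
        · rw [h]; exact zero_mem _
        · obtain ⟨u, hu, -⟩ := coeff_rename_ne_zero _ _ _ h
          rw [← hu, coeff_rename_mapDomain _ (Fin.castLE_injective _) (g i) u]
          exact isAlgebraic_iff_isIntegral.mp (halg i u)
      · rw [coeff_X']
        split
        · exact one_mem _
        · exact zero_mem _

lemma aeval_coeff_mem (g : ∀ i : Fin n, MvPolynomial (Fin ((i : ℕ) + 1)) ℝ)
    (halg : ∀ (i : Fin n) (d : Fin ((i : ℕ) + 1) →₀ ℕ),
      IsAlgebraic ℚ (MvPolynomial.coeff d (g i)))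
    (P : MvPolynomial (Fin (n + 1)) ℤ) (d : Fin (n + 1) →₀ ℕ) :
    (aeval (R := ℤ) (substMap g) P).coeff d ∈ integralClosure ℚ ℝ := by
  induction P using MvPolynomial.induction_on generalizing d with
  | C z =>
      rw [aeval_C]
      have : (algebraMap ℤ (MvPolynomial (Fin (n + 1)) ℝ)) z = MvPolynomial.C ((z : ℤ) : ℝ) := by
        rw [map_intCast (MvPolynomial.C : ℝ →+* MvPolynomial (Fin (n + 1)) ℝ) z]
        simp
      rw [this, coeff_C]
      split
      · exact intCast_mem _ z
      · exact zero_mem _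
  | add p q hp hq => rw [map_add, coeff_add]; exact add_mem (hp d) (hq d)
  | mul_X p j hp =>
      rw [map_mul, aeval_X, coeff_mul]
      refine Subalgebra.sum_mem _ fun x _ => mul_mem (hp x.1) (substMap_coeff_mem g halg j x.2)

/-- Stripping powers of `X`: from a nonzero polynomial relation with root `a ≠ 0`
in a domain, get one with nonzero constant coefficient. -/
lemma strip_aux {R S : Type*} [CommRing R] [CommRing S] [IsDomain S]
    (f : R →+* S) (a : S) (ha : a ≠ 0) :
    ∀ (N : ℕ) (q : Polynomial R), q.natDegree ≤ N → q ≠ 0 → Polynomial.eval₂ f a q = 0 →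
      ∃ q' : Polynomial R, Polynomial.eval₂ f a q' = 0 ∧ q'.coeff 0 ≠ 0 := by
  intro N
  induction N with
  | zero =>
      intro q hdeg hq he
      refine ⟨q, he, fun h0 => hq ?_⟩
      rw [Polynomial.eq_C_of_natDegree_le_zero hdeg, h0, map_zero]
  | succ N ih =>
      intro q hdeg hq he
      by_cases h0 : q.coeff 0 = 0
      · have hq' : q.divX * Polynomial.X = q := by
          conv_rhs => rw [← Polynomial.divX_mul_X_add q]
          rw [h0, map_zero, add_zero]
        have hdvx : q.divX ≠ 0 := fun h => hq (by rw [← hq', h, zero_mul])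
        have he' : Polynomial.eval₂ f a q.divX = 0 := by
          have h2 := he
          rw [← hq', Polynomial.eval₂_mul, Polynomial.eval₂_X] at h2
          rcases mul_eq_zero.mp h2 with h | h
          · exact h
          · exact absurd h ha
        refine ih q.divX ?_ hdvx he'
        have := Polynomial.natDegree_divX_eq_natDegree_tsub_one (p := q)
        omega
      · exact ⟨q, he, h0⟩

/-- A nonzero multivariate polynomial whose coefficients are algebraic over `ℚ`
cannot vanish at a tuple that is algebraically independent over `ℚ`. -/
lemma eq_zero_of_eval_eq_zero {m : ℕ} {r : Fin m → ℝ} (hAI : AlgebraicIndependent ℚ r)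
    (D : MvPolynomial (Fin m) ℝ) (hD : ∀ d, D.coeff d ∈ integralClosure ℚ ℝ)
    (hev : MvPolynomial.eval r D = 0) : D = 0 := by
  by_contra hne
  letI : Algebra (MvPolynomial (Fin m) ℚ) (MvPolynomial (Fin m) ℝ) :=
    MvPolynomial.algebraMvPolynomial
  have hCint : ∀ a : ℝ, a ∈ integralClosure ℚ ℝ →
      IsIntegral (MvPolynomial (Fin m) ℚ) (MvPolynomial.C a : MvPolynomial (Fin m) ℝ) := by
    intro a ha
    have ha' : IsIntegral ℚ a := ha
    have h1 : IsIntegral ℚ (MvPolynomial.C a : MvPolynomial (Fin m) ℝ) :=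
      IsIntegral.map (F := ℝ →ₐ[ℚ] MvPolynomial (Fin m) ℝ)
        ({ (MvPolynomial.C : ℝ →+* MvPolynomial (Fin m) ℝ) with
          commutes' := fun q => rfl }) ha'
    exact h1.tower_top
  have hint : IsIntegral (MvPolynomial (Fin m) ℚ) D := by
    have hmem : D ∈ integralClosure (MvPolynomial (Fin m) ℚ) (MvPolynomial (Fin m) ℝ) := by
      rw [← support_sum_monomial_coeff D]
      refine Subalgebra.sum_mem _ fun d _ => ?_
      have hfactor : (monomial d (D.coeff d) : MvPolynomial (Fin m) ℝ) =
          MvPolynomial.C (D.coeff d) * monomial d 1 := by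
        rw [C_mul_monomial, mul_one]
      rw [hfactor]
      have hmono : (monomial d (1 : ℝ) : MvPolynomial (Fin m) ℝ) =
          algebraMap (MvPolynomial (Fin m) ℚ) (MvPolynomial (Fin m) ℝ) (monomial d (1 : ℚ)) := by
        rw [MvPolynomial.algebraMap_def, map_monomial,
          show (algebraMap ℚ ℝ) 1 = 1 from map_one _]
      exact mul_mem (hCint _ (hD d)) (by rw [hmono]; exact isIntegral_algebraMap)
    exact hmem
  obtain ⟨p, hpmonic, hp⟩ := hint
  obtain ⟨q', he', h0'⟩ :=
    strip_aux (algebraMap (MvPolynomial (Fin m) ℚ) (MvPolynomial (Fin m) ℝ)) D hne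
      p.natDegree p le_rfl hpmonic.ne_zero hp
  have hhom : Polynomial.eval₂ ((MvPolynomial.eval r).comp
      (algebraMap (MvPolynomial (Fin m) ℚ) (MvPolynomial (Fin m) ℝ)))
      (MvPolynomial.eval r D) q' = 0 := by
    rw [← Polynomial.hom_eval₂, he', map_zero]
  rw [hev, Polynomial.eval₂_at_zero] at hhom
  have hpsi : ((MvPolynomial.eval r).comp
      (algebraMap (MvPolynomial (Fin m) ℚ) (MvPolynomial (Fin m) ℝ))) (q'.coeff 0) =
      MvPolynomial.aeval r (q'.coeff 0) := by
    rw [RingHom.comp_apply, MvPolynomial.algebraMap_def, MvPolynomial.eval_map,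
      MvPolynomial.aeval_def]
  rw [hpsi] at hhom
  exact h0' (algebraicIndependent_iff.mp hAI _ hhom)

end PuiseuxAux

open MvPolynomial PuiseuxAux in
/-- If `R_r̄` is discretely ordered for one tuple `r̄ ∈ (0,1)ⁿ` with algebraically
independent coordinates, then it is discretely ordered for every such tuple. -/
theorem discretelyOrdered_of_discretelyOrdered (n : ℕ) (hn : 1 ≤ n)
    (g : ∀ i : Fin n, MvPolynomial (Fin ((i : ℕ) + 1)) ℝ)
    (halg : ∀ (i : Fin n) (d : Fin ((i : ℕ) + 1) →₀ ℕ),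
      IsAlgebraic ℚ (MvPolynomial.coeff d (g i)))
    (hex : ∃ r : Fin n → ℝ, (∀ i, r i ∈ Set.Ioo (0 : ℝ) 1) ∧
      AlgebraicIndependent ℚ r ∧ DiscretelyOrderedLE ↥(puiseuxGen g r)) :
    ∀ r' : Fin n → ℝ, (∀ i, r' i ∈ Set.Ioo (0 : ℝ) 1) → AlgebraicIndependent ℚ r' →
      DiscretelyOrderedLE ↥(puiseuxGen g r') := by
  classical
  obtain ⟨r, hr, hAI, hdisc⟩ := hex
  intro r' hr' hAI' x' hx'
  obtain ⟨h0, hn0, h1, hn1⟩ := hx'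
  obtain ⟨P, hP⟩ := exists_theta_eq g r' x'.2
  set Q : MvPolynomial (Fin (n + 1)) ℝ := aeval (R := ℤ) (substMap g) P with hQdef
  set Qt : Polynomial (MvPolynomial (Fin n) ℝ) := MvPolynomial.finSuccEquiv ℝ n Q with hQtdef
  set q' : Polynomial ℝ := Qt.map (MvPolynomial.eval r') with hq'def
  have hx'val : ∀ t : Set.Ioi (0 : ℝ), (x' : PuiseuxFuns) t = q'.eval (t : ℝ) := by
    intro t
    rw [← hP, theta_apply, ← hQdef, MvPolynomial.eval_eq_eval_mv_eval', ← hQtdef, ← hq'def]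
  -- `q'` is eventually in `[0,1]`, hence constant.
  obtain ⟨T0, hT0⟩ := le_iff.mp (h0 : ((0 : ↥(puiseuxGen g r')) : PuiseuxFuns) ≤ x')
  obtain ⟨T1, hT1⟩ := le_iff.mp (h1 : ((x' : ↥(puiseuxGen g r')) : PuiseuxFuns) ≤ 1)
  have hdeg : q'.degree ≤ 0 := by
    rw [← Polynomial.abs_isBoundedUnder_iff]
    refine ⟨1, ?_⟩
    rw [Filter.eventually_map, Filter.eventually_atTop]
    refine ⟨max (max T0 T1) 0 + 1, fun b hb => ?_⟩
    have hlt : max (max T0 T1) 0 < b :=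
      lt_of_lt_of_le (lt_add_of_pos_right _ one_pos) hb
    have hb0 : (0 : ℝ) < b := lt_of_le_of_lt (le_max_right _ _) hlt
    have hbT0 : T0 < b :=
      lt_of_le_of_lt (le_trans (le_max_left T0 T1) (le_max_left _ _)) hlt
    have hbT1 : T1 < b :=
      lt_of_le_of_lt (le_trans (le_max_right T0 T1) (le_max_left _ _)) hlt
    set tb : Set.Ioi (0 : ℝ) := ⟨b, hb0⟩ with htb
    have hv0 : (0 : ℝ) ≤ (x' : PuiseuxFuns) tb := by
      have := hT0 tb hbT0
      rwa [show ((0 : ↥(puiseuxGen g r')) : PuiseuxFuns) tb = 0 from rfl] at this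
    have hv1 : (x' : PuiseuxFuns) tb ≤ 1 := by
      have := hT1 tb hbT1
      rwa [show ((1 : ↥(puiseuxGen g r')) : PuiseuxFuns) tb = 1 from rfl] at this
    rw [hx'val tb] at hv0 hv1
    have hv0' : (0 : ℝ) ≤ Polynomial.eval b q' := hv0
    have hv1' : Polynomial.eval b q' ≤ 1 := hv1
    show |Polynomial.eval b q'| ≤ 1
    rw [abs_le]
    exact ⟨le_trans (by norm_num) hv0', hv1'⟩
  have hq'C : q' = Polynomial.C (q'.coeff 0) := Polynomial.eq_C_of_degree_le_zero hdeg
  set c' : ℝ := q'.coeff 0 with hc'def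
  have hx'c : ∀ t : Set.Ioi (0 : ℝ), (x' : PuiseuxFuns) t = c' := by
    intro t
    rw [hx'val t, hq'C, Polynomial.eval_C]
  -- `0 < c' < 1`
  have hc'pos : 0 < c' := by
    by_contra hle
    push_neg at hle
    refine hn0 (le_iff.mpr ⟨0, fun t _ => ?_⟩)
    rw [show ((0 : ↥(puiseuxGen g r')) : PuiseuxFuns) t = 0 from rfl, hx'c t]
    exact hle
  have hc'lt1 : c' < 1 := by
    by_contra hle
    push_neg at hle
    refine hn1 (le_iff.mpr ⟨0, fun t _ => ?_⟩)
    rw [show ((1 : ↥(puiseuxGen g r')) : PuiseuxFuns) t = 1 from rfl, hx'c t]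
    exact hle
  clear h0 h1 hn0 hn1 hT0 hT1
  -- the nonconstant (in `t`) coefficients of `Q` vanish identically
  have hcoeffQt : ∀ (k : ℕ) (d : Fin n →₀ ℕ),
      (Qt.coeff k).coeff d ∈ integralClosure ℚ ℝ := by
    intro k d
    rw [hQtdef, MvPolynomial.finSuccEquiv_coeff_coeff]
    exact aeval_coeff_mem g halg P _
  have hvanish : ∀ k : ℕ, k ≠ 0 → Qt.coeff k = 0 := by
    intro k hk
    refine eq_zero_of_eval_eq_zero hAI' (Qt.coeff k) (hcoeffQt k) ?_
    have hcm : q'.coeff k = MvPolynomial.eval r' (Qt.coeff k) := by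
      rw [hq'def, Polynomial.coeff_map]
    rw [← hcm, hq'C, Polynomial.coeff_C, if_neg hk]
  set D : MvPolynomial (Fin n) ℝ := Qt.coeff 0 with hDdef
  have hQtC : Qt = Polynomial.C D := by
    ext k
    rcases eq_or_ne k 0 with rfl | hk
    · rw [Polynomial.coeff_C, if_pos rfl]
    · rw [hvanish k hk, Polynomial.coeff_C, if_neg hk]
  have hc'D : c' = MvPolynomial.eval r' D := by
    rw [hc'def, hq'def, Polynomial.coeff_map, ← hDdef]
  -- the corresponding element over `r` is the constant `c`
  set c : ℝ := MvPolynomial.eval r D with hcdef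
  have hthetac : ∀ t : Set.Ioi (0 : ℝ), theta g r P t = c := by
    intro t
    rw [theta_apply, ← hQdef, MvPolynomial.eval_eq_eval_mv_eval', ← hQtdef, hQtC,
      Polynomial.map_C, Polynomial.eval_C, ← hcdef]
  set m : ℤ := ⌊c⌋ with hmdef
  -- `c` is not an integer
  have hcne : c ≠ (m : ℝ) := by
    intro hceq
    have hzero : D - MvPolynomial.C ((m : ℤ) : ℝ) = 0 := by
      refine eq_zero_of_eval_eq_zero hAI _ (fun d => ?_) ?_
      · rw [coeff_sub]
        refine sub_mem (hcoeffQt 0 d) ?_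
        rw [coeff_C]
        split
        · exact intCast_mem _ m
        · exact zero_mem _
      · rw [map_sub, eval_C, ← hcdef, hceq, sub_self]
    have hDC : D = MvPolynomial.C ((m : ℤ) : ℝ) := by
      have := sub_eq_zero.mp hzero
      exact this
    rw [hDC, eval_C] at hc'D
    have h0m : (0 : ℤ) < m := by exact_mod_cast hc'D ▸ hc'pos
    have h1m : m < 1 := by exact_mod_cast hc'D ▸ hc'lt1
    omega
  have hγpos : 0 < c - (m : ℝ) := by
    have hle : (m : ℝ) ≤ c := Int.floor_le c
    rcases lt_or_eq_of_le hle with h | h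
    · linarith
    · exact absurd h.symm hcne
  have hγlt1 : c - (m : ℝ) < 1 := by
    have := Int.lt_floor_add_one c
    linarith
  -- the element `theta g r (P - C m)` of `R_r̄` is the constant `c - m ∈ (0,1)`
  set y : PuiseuxFuns := theta g r (P - MvPolynomial.C m) with hydef
  have hyval : ∀ t : Set.Ioi (0 : ℝ), y t = c - (m : ℝ) := by
    intro t
    have hsplit : y = theta g r P - theta g r (MvPolynomial.C m) := by
      rw [hydef, map_sub]
    rw [hsplit, sub_apply, hthetac t]
    congr 1
    rw [theta_apply, aeval_C]
    have : (algebraMap ℤ (MvPolynomial (Fin (n + 1)) ℝ)) m = ((m : ℤ) : MvPolynomial (Fin (n + 1)) ℝ) := by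
      simp
    rw [this, map_intCast]
  refine hdisc ⟨y, theta_mem g r _⟩ ⟨?_, ?_, ?_, ?_⟩
  · refine le_iff.mpr ⟨0, fun t _ => ?_⟩
    rw [show ((0 : ↥(puiseuxGen g r)) : PuiseuxFuns) t = 0 from rfl,
      show ((⟨y, theta_mem g r _⟩ : ↥(puiseuxGen g r)) : PuiseuxFuns) t = y t from rfl, hyval t]
    linarith
  · intro hle
    obtain ⟨T, hT⟩ := le_iff.mp
      (hle : ((⟨y, theta_mem g r _⟩ : ↥(puiseuxGen g r)) : PuiseuxFuns) ≤
        ((0 : ↥(puiseuxGen g r)) : PuiseuxFuns))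
    have ht0 : (0 : ℝ) < max T 0 + 1 := by
      have : (0 : ℝ) ≤ max T 0 := le_max_right _ _
      linarith
    have hTt : T < max T 0 + 1 := by
      have : T ≤ max T 0 := le_max_left _ _
      linarith
    have := hT ⟨max T 0 + 1, ht0⟩ hTt
    rw [show ((0 : ↥(puiseuxGen g r)) : PuiseuxFuns) ⟨max T 0 + 1, ht0⟩ = 0 from rfl] at this
    have hyv := hyval ⟨max T 0 + 1, ht0⟩
    rw [show ((⟨y, theta_mem g r _⟩ : ↥(puiseuxGen g r)) : PuiseuxFuns) ⟨max T 0 + 1, ht0⟩ =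
      y ⟨max T 0 + 1, ht0⟩ from rfl, hyv] at this
    linarith
  · refine le_iff.mpr ⟨0, fun t _ => ?_⟩
    rw [show ((1 : ↥(puiseuxGen g r)) : PuiseuxFuns) t = 1 from rfl,
      show ((⟨y, theta_mem g r _⟩ : ↥(puiseuxGen g r)) : PuiseuxFuns) t = y t from rfl, hyval t]
    linarith
  · intro hle
    obtain ⟨T, hT⟩ := le_iff.mp
      (hle : ((1 : ↥(puiseuxGen g r)) : PuiseuxFuns) ≤
        ((⟨y, theta_mem g r _⟩ : ↥(puiseuxGen g r)) : PuiseuxFuns))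
    have ht0 : (0 : ℝ) < max T 0 + 1 := by
      have : (0 : ℝ) ≤ max T 0 := le_max_right _ _
      linarith
    have hTt : T < max T 0 + 1 := by
      have : T ≤ max T 0 := le_max_left _ _
      linarith
    have := hT ⟨max T 0 + 1, ht0⟩ hTt
    rw [show ((1 : ↥(puiseuxGen g r)) : PuiseuxFuns) ⟨max T 0 + 1, ht0⟩ = 1 from rfl] at this
    have hyv := hyval ⟨max T 0 + 1, ht0⟩
    rw [show ((⟨y, theta_mem g r _⟩ : ↥(puiseuxGen g r)) : PuiseuxFuns) ⟨max T 0 + 1, ht0⟩ =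
      y ⟨max T 0 + 1, ht0⟩ from rfl, hyv] at this
    linarith
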